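/- Let A ∈ ℂ^{N×N} with a fixed singular value decomposition A = Σ_{j=1}^N λ_j u_j v_j* (λ_1 ≥ … ≥ λ_N ≥ 0, (u_j) and (v_j) orthonormal), let r ∈ {1,…,N}, and let ε ∈ (0,1). Suppose M ∈ ℂ^{m×N} is an ε-JL map of the set {u_j : r < j ≤ N} ∪ {v_j : r < j ≤ N} of the smallest N−r left and right singular vectors of A. Then σ₁(M A_{∖r} M*) ≤ (1+ε)·‖A_{∖r}‖_*, where A_{∖r} := Σ_{j=r+1}^N λ_j u_j v_j*. -/

import Mathlib

open scoped Matrix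

/-- The squared Euclidean (ℓ²) norm of a vector in `ℂ^n`. -/
noncomputable def nsq {n : ℕ} (x : Fin n → ℂ) : ℝ := ∑ i, ‖x i‖ ^ 2

/-- `M` is an `ε`-JL map of the set `S ⊆ ℂ^N`. -/
def IsJLMap {m N : ℕ} (M : Matrix (Fin m) (Fin N) ℂ) (ε : ℝ) (S : Set (Fin N → ℂ)) : Prop :=
  ∀ x ∈ S, (1 - ε) * nsq x ≤ nsq (M.mulVec x) ∧ nsq (M.mulVec x) ≤ (1 + ε) * nsq x

/-- The `j`-th largest singular value of a square matrix (0-indexed), `0` if `j ≥ d`. -/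
noncomputable def sval {d : ℕ} (B : Matrix (Fin d) (Fin d) ℂ) (j : ℕ) : ℝ :=
  if h : j < d then
    Real.sqrt ((Matrix.isHermitian_conjTranspose_mul_self B).eigenvalues
      (Tuple.sort (Matrix.isHermitian_conjTranspose_mul_self B).eigenvalues (Fin.rev ⟨j, h⟩)))
  else 0

/-- The nuclear norm `‖B‖_* = Σ_j σ_j(B)` of a square matrix. -/
noncomputable def nuclearNorm {d : ℕ} (B : Matrix (Fin d) (Fin d) ℂ) : ℝ :=
  ∑ j ∈ Finset.range d, sval B j

/-- The tail `A_{∖r} = Σ_{j > r} λ_j u_j v_j*` of a singular value decomposition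
(`r` counted 1-based, i.e. the sum is over all 0-based indices `j` with `r ≤ j`). -/
noncomputable def tailMat {N : ℕ} (lam : Fin N → ℝ) (u v : Fin N → Fin N → ℂ) (r : ℕ) :
    Matrix (Fin N) (Fin N) ℂ :=
  ∑ j : Fin N, if r ≤ (j : ℕ) then
    lam j • Matrix.vecMulVec (u j) (fun k => (starRingEnd ℂ) (v j k)) else 0

/-! ### Auxiliary lemmas -/

section Aux

lemma nsq_nonneg {n : ℕ} (x : Fin n → ℂ) : 0 ≤ nsq x :=
  Finset.sum_nonneg fun _ _ => sq_nonneg _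

lemma nsq_eq_norm_sq {n : ℕ} (x : Fin n → ℂ) :
    nsq x = ‖(WithLp.equiv 2 (Fin n → ℂ)).symm x‖ ^ 2 := by
  rw [EuclideanSpace.norm_eq, Real.sq_sqrt (by positivity)]
  rfl

lemma norm_eq_sqrt_nsq {n : ℕ} (x : Fin n → ℂ) :
    ‖(WithLp.equiv 2 (Fin n → ℂ)).symm x‖ = Real.sqrt (nsq x) := by
  rw [nsq_eq_norm_sq, Real.sqrt_sq (norm_nonneg _)]

lemma star_dot_self {n : ℕ} (x : Fin n → ℂ) :
    dotProduct (star x) x = (nsq x : ℂ) := by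
  simp only [dotProduct, nsq, Pi.star_apply, Complex.ofReal_sum]
  refine Finset.sum_congr rfl fun i _ => ?_
  simp [Complex.star_def, ← Complex.normSq_eq_conj_mul_self, Complex.normSq_eq_norm_sq]

lemma eig_le_of_opbound {d : ℕ} (B : Matrix (Fin d) (Fin d) ℂ) {c : ℝ}
    (h : ∀ x, nsq (B.mulVec x) ≤ c ^ 2 * nsq x) (i : Fin d) :
    (Matrix.isHermitian_conjTranspose_mul_self B).eigenvalues i ≤ c ^ 2 := by
  set hH := Matrix.isHermitian_conjTranspose_mul_self B
  set w : Fin d → ℂ := ⇑(hH.eigenvectorBasis i) with hw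
  have hnw : nsq w = 1 := by
    have h1 : ‖hH.eigenvectorBasis i‖ = 1 := hH.eigenvectorBasis.orthonormal.1 i
    have : nsq w = ‖hH.eigenvectorBasis i‖ ^ 2 := by
      rw [EuclideanSpace.norm_eq, Real.sq_sqrt (by positivity)]
      rfl
    rw [this, h1, one_pow]
  have heig : (Bᴴ * B) *ᵥ w = hH.eigenvalues i • w := hH.mulVec_eigenvectorBasis i
  have key : (nsq (B.mulVec w) : ℂ) = (hH.eigenvalues i : ℂ) := by
    rw [← star_dot_self]
    rw [Matrix.star_mulVec, ← Matrix.dotProduct_mulVec, Matrix.mulVec_mulVec, heig]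
    have : star w ⬝ᵥ (hH.eigenvalues i • w) = (hH.eigenvalues i : ℂ) * (star w ⬝ᵥ w) := by
      simp [dotProduct, Finset.mul_sum, Complex.real_smul]
      exact Finset.sum_congr rfl fun k _ => by ring
    rw [this, star_dot_self, hnw]
    simp
  have keyr : nsq (B.mulVec w) = hH.eigenvalues i := by exact_mod_cast key
  have := h w
  rw [keyr, hnw, mul_one] at this
  exact this

lemma sval_le_of_opbound {d : ℕ} (B : Matrix (Fin d) (Fin d) ℂ) {c : ℝ} (hc : 0 ≤ c)
    (h : ∀ x, nsq (B.mulVec x) ≤ c ^ 2 * nsq x) (j : ℕ) : sval B j ≤ c := by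
  unfold sval
  split
  · calc Real.sqrt _ ≤ Real.sqrt (c ^ 2) := Real.sqrt_le_sqrt (eig_le_of_opbound B h _)
      _ = c := Real.sqrt_sq hc
  · exact hc

lemma nuclearNorm_eq_sum_sqrt_eig {d : ℕ} (B : Matrix (Fin d) (Fin d) ℂ) :
    nuclearNorm B
      = ∑ i : Fin d, Real.sqrt ((Matrix.isHermitian_conjTranspose_mul_self B).eigenvalues i) := by
  unfold nuclearNorm
  rw [← Fin.sum_univ_eq_sum_range]
  set hH := Matrix.isHermitian_conjTranspose_mul_self B
  have h1 : ∀ i : Fin d, sval B (i : ℕ)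
      = Real.sqrt (hH.eigenvalues (Tuple.sort hH.eigenvalues (Fin.rev i))) := by
    intro i
    unfold sval
    rw [dif_pos i.isLt]
  simp_rw [h1]
  exact Fintype.sum_equiv ((Fin.revPerm).trans (Tuple.sort hH.eigenvalues)) _ _ (fun i => rfl)

/-- If a Hermitian matrix is unitarily conjugate to a real diagonal matrix, then any sum of a
function of its eigenvalues equals the corresponding sum over the diagonal entries. -/
lemma sum_f_eig_eq {d : ℕ} (H : Matrix (Fin d) (Fin d) ℂ) (hH : H.IsHermitian)
    (μ : Fin d → ℝ) (V : Matrix (Fin d) (Fin d) ℂ) (hV : Vᴴ * V = 1)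
    (hHV : H = V * Matrix.diagonal (fun i => (μ i : ℂ)) * Vᴴ)
    (f : ℝ → ℝ) :
    ∑ i, f (hH.eigenvalues i) = ∑ i, f (μ i) := by
  have hVV : V * Vᴴ = 1 := by
    rw [mul_eq_one_comm] at hV; exact hV
  have hdet : ∀ a : Fin d → ℝ, ∀ W : Matrix (Fin d) (Fin d) ℂ, W * Wᴴ = 1 → ∀ t : ℂ,
      Matrix.det (t • (1 : Matrix (Fin d) (Fin d) ℂ)
        - W * Matrix.diagonal (fun i => (a i : ℂ)) * Wᴴ) = ∏ i, (t - (a i : ℂ)) := by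
    intro a W hW t
    have h1 : t • (1 : Matrix (Fin d) (Fin d) ℂ)
        - W * Matrix.diagonal (fun i => (a i : ℂ)) * Wᴴ
        = W * (Matrix.diagonal (fun i => t - (a i : ℂ))) * Wᴴ := by
      have : Matrix.diagonal (fun i => t - (a i : ℂ))
          = t • (1 : Matrix (Fin d) (Fin d) ℂ) - Matrix.diagonal (fun i => (a i : ℂ)) := by
        rw [Matrix.smul_one_eq_diagonal, Matrix.diagonal_sub]
      rw [this, Matrix.mul_sub, Matrix.sub_mul, Matrix.mul_smul, Matrix.smul_mul, mul_one, hW]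
    have hW' : Wᴴ * W = 1 := mul_eq_one_comm.mp hW
    rw [h1, Matrix.det_mul, Matrix.det_mul, mul_comm, ← mul_assoc, ← Matrix.det_mul, hW']
    simp [Matrix.det_diagonal]
  have hUmem := (Matrix.mem_unitaryGroup_iff).mp (hH.eigenvectorUnitary).2
  have hU : H = (hH.eigenvectorUnitary : Matrix (Fin d) (Fin d) ℂ)
      * Matrix.diagonal (fun i => (hH.eigenvalues i : ℂ))
      * (hH.eigenvectorUnitary : Matrix (Fin d) (Fin d) ℂ)ᴴ := by
    simpa [Matrix.star_eq_conjTranspose, Function.comp_def] using hH.spectral_theorem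
  have hdet1 : ∀ t : ℂ, (∏ i, (t - (hH.eigenvalues i : ℂ))) = ∏ i, (t - (μ i : ℂ)) := by
    intro t
    rw [← hdet hH.eigenvalues (hH.eigenvectorUnitary : Matrix (Fin d) (Fin d) ℂ)
        (by simpa [Matrix.star_eq_conjTranspose] using hUmem) t,
      ← hdet μ V hVV t]
    rw [← hHV, ← hU]
  have hpoly :
      (Finset.univ.val.map fun i => Polynomial.X - Polynomial.C ((hH.eigenvalues i : ℂ))).prod
      = (Finset.univ.val.map fun i => Polynomial.X - Polynomial.C ((μ i : ℂ))).prod := by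
    apply Polynomial.funext
    intro t
    rw [Polynomial.eval_multiset_prod, Polynomial.eval_multiset_prod, Multiset.map_map,
      Multiset.map_map]
    simp only [Function.comp_def, Polynomial.eval_sub, Polynomial.eval_X, Polynomial.eval_C]
    rw [← Finset.prod_eq_multiset_prod, ← Finset.prod_eq_multiset_prod]
    exact hdet1 t
  have hroots : (Finset.univ.val.map fun i => ((hH.eigenvalues i : ℂ)))
      = (Finset.univ.val.map fun i => ((μ i : ℂ))) := by
    have h1 := Polynomial.roots_multiset_prod_X_sub_C
      (Finset.univ.val.map fun i : Fin d => ((hH.eigenvalues i : ℂ)))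
    have h2 := Polynomial.roots_multiset_prod_X_sub_C
      (Finset.univ.val.map fun i : Fin d => ((μ i : ℂ)))
    rw [Multiset.map_map] at h1 h2
    rw [← h1, ← h2]
    simp only [Function.comp_def]
    rw [hpoly]
  have hrootsR : (Finset.univ.val.map fun i => hH.eigenvalues i)
      = (Finset.univ.val.map fun i => μ i) := by
    have := congrArg (Multiset.map Complex.re) hroots
    rwa [Multiset.map_map, Multiset.map_map] at this
  calc ∑ i, f (hH.eigenvalues i)
      = ((Finset.univ.val.map fun i => hH.eigenvalues i).map f).sum := by
        rw [Multiset.map_map]; rfl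
    _ = ((Finset.univ.val.map fun i => μ i).map f).sum := by rw [hrootsR]
    _ = ∑ i, f (μ i) := by rw [Multiset.map_map]; rfl

lemma vecMulVec_mul_vecMulVec {n : ℕ} (a b c d : Fin n → ℂ) :
    Matrix.vecMulVec a b * Matrix.vecMulVec c d
      = (dotProduct b c) • Matrix.vecMulVec a d := by
  ext i j
  simp only [Matrix.mul_apply, Matrix.vecMulVec_apply, Matrix.smul_apply, dotProduct,
    smul_eq_mul, Finset.sum_mul]
  exact Finset.sum_congr rfl fun k _ => by ring

lemma sum_mulVec {n m : ℕ} {ι : Type*} (s : Finset ι) (f : ι → Matrix (Fin m) (Fin n) ℂ)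
    (x : Fin n → ℂ) : (∑ j ∈ s, f j) *ᵥ x = ∑ j ∈ s, (f j) *ᵥ x := by
  ext i
  simp only [Matrix.mulVec, dotProduct, Finset.sum_apply, Matrix.sum_apply,
    Finset.sum_mul]
  exact Finset.sum_comm

lemma mulVec_sum {n m : ℕ} {ι : Type*} (s : Finset ι) (M : Matrix (Fin m) (Fin n) ℂ)
    (x : ι → Fin n → ℂ) : M *ᵥ (∑ j ∈ s, x j) = ∑ j ∈ s, M *ᵥ (x j) :=
  map_sum M.mulVecLin x s

lemma conjT_vecMulVec {n : ℕ} (a b : Fin n → ℂ) :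
    (Matrix.vecMulVec a b)ᴴ = Matrix.vecMulVec (star b) (star a) := by
  ext i j
  simp [Matrix.vecMulVec_apply, Matrix.conjTranspose_apply, mul_comm]

lemma vecMulVec_mulVec {n : ℕ} (a b x : Fin n → ℂ) :
    Matrix.vecMulVec a b *ᵥ x = (dotProduct b x) • a := by
  ext i
  simp [Matrix.mulVec, Matrix.vecMulVec_apply, dotProduct, Finset.sum_mul,
    Finset.mul_sum]
  exact Finset.sum_congr rfl fun k _ => by ring

lemma star_dot {N : ℕ} (a b : Fin N → ℂ) :
    dotProduct (star a) b = ∑ k, (starRingEnd ℂ) (a k) * b k := rfl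

/-- `tailMat` with the `if` pushed into the scalar. -/
noncomputable def lamt {N : ℕ} (lam : Fin N → ℝ) (r : ℕ) : Fin N → ℝ :=
  fun j => if r ≤ (j : ℕ) then lam j else 0

lemma tailMat_eq {N : ℕ} (lam : Fin N → ℝ) (u v : Fin N → Fin N → ℂ) (r : ℕ) :
    tailMat lam u v r = ∑ j, lamt lam r j • Matrix.vecMulVec (u j) (star (v j)) := by
  unfold tailMat lamt
  refine Finset.sum_congr rfl fun j _ => ?_
  have : (fun k => (starRingEnd ℂ) (v j k)) = star (v j) := rfl
  rw [this]
  split <;> simp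

lemma tail_conj_mul {N : ℕ} (lam : Fin N → ℝ) (u v : Fin N → Fin N → ℂ) (r : ℕ)
    (hu : ∀ i j, ∑ k, (starRingEnd ℂ) (u i k) * u j k = if i = j then 1 else 0) :
    (tailMat lam u v r)ᴴ * (tailMat lam u v r)
    = ∑ j, ((lamt lam r j) ^ 2 : ℝ) • Matrix.vecMulVec (v j) (star (v j)) := by
  rw [tailMat_eq]
  have hcts : (∑ j, lamt lam r j • Matrix.vecMulVec (u j) (star (v j)))ᴴ
      = ∑ j, lamt lam r j • Matrix.vecMulVec (v j) (star (u j)) := by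
    rw [Matrix.conjTranspose_sum]
    refine Finset.sum_congr rfl fun j _ => ?_
    rw [Matrix.conjTranspose_smul, conjT_vecMulVec, star_star, star_trivial]
  rw [hcts, Finset.sum_mul_sum]
  have hterm : ∀ j k : Fin N,
      (lamt lam r j • Matrix.vecMulVec (v j) (star (u j)))
        * (lamt lam r k • Matrix.vecMulVec (u k) (star (v k)))
      = if j = k then (lamt lam r j ^ 2 : ℝ) • Matrix.vecMulVec (v j) (star (v j)) else 0 := by
    intro j k
    rw [Matrix.smul_mul, Matrix.mul_smul, vecMulVec_mul_vecMulVec]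
    rw [star_dot (u j) (u k), hu j k]
    by_cases h : j = k
    · subst h
      simp [smul_smul, sq]
    · simp [h]
  calc ∑ j, ∑ k, (lamt lam r j • Matrix.vecMulVec (v j) (star (u j)))
        * (lamt lam r k • Matrix.vecMulVec (u k) (star (v k)))
      = ∑ j, ∑ k, if j = k then (lamt lam r j ^ 2 : ℝ) • Matrix.vecMulVec (v j) (star (v j))
          else 0 := by
        exact Finset.sum_congr rfl fun j _ => Finset.sum_congr rfl fun k _ => hterm j k
    _ = ∑ j, ((lamt lam r j) ^ 2 : ℝ) • Matrix.vecMulVec (v j) (star (v j)) := by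
        refine Finset.sum_congr rfl fun j _ => ?_
        simp

lemma tail_VDV {N : ℕ} (lam : Fin N → ℝ) (v : Fin N → Fin N → ℂ) (r : ℕ) :
    (∑ j, ((lamt lam r j) ^ 2 : ℝ) • Matrix.vecMulVec (v j) (star (v j)))
    = (Matrix.of fun a j => v j a) * Matrix.diagonal (fun j => ((lamt lam r j ^ 2 : ℝ) : ℂ))
      * (Matrix.of fun a j => v j a)ᴴ := by
  ext a b
  rw [Matrix.mul_apply]
  simp only [Matrix.sum_apply, Matrix.smul_apply, Matrix.vecMulVec_apply, Matrix.mul_diagonal,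
    Matrix.conjTranspose_apply, Matrix.of_apply, Pi.star_apply]
  refine Finset.sum_congr rfl fun j _ => ?_
  simp [Complex.real_smul]
  ring

lemma tail_V_unitary {N : ℕ} (v : Fin N → Fin N → ℂ)
    (hv : ∀ i j, ∑ k, (starRingEnd ℂ) (v i k) * v j k = if i = j then 1 else 0) :
    (Matrix.of fun a j => v j a)ᴴ * (Matrix.of fun a j => v j a) = 1 := by
  ext i j
  rw [Matrix.mul_apply, Matrix.one_apply]
  simpa using hv i j

/-- The nuclear norm of the tail matrix is the sum of the tail singular values. -/
lemma nuclearNorm_tailMat {N : ℕ} (lam : Fin N → ℝ) (u v : Fin N → Fin N → ℂ) (r : ℕ)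
    (hnn : ∀ j, 0 ≤ lam j)
    (hu : ∀ i j, ∑ k, (starRingEnd ℂ) (u i k) * u j k = if i = j then 1 else 0)
    (hv : ∀ i j, ∑ k, (starRingEnd ℂ) (v i k) * v j k = if i = j then 1 else 0) :
    nuclearNorm (tailMat lam u v r) = ∑ j, lamt lam r j := by
  rw [nuclearNorm_eq_sum_sqrt_eig]
  have h := sum_f_eig_eq ((tailMat lam u v r)ᴴ * (tailMat lam u v r))
    (Matrix.isHermitian_conjTranspose_mul_self _) (fun j => lamt lam r j ^ 2)
    (Matrix.of fun a j => v j a) (tail_V_unitary v hv)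
    (by rw [tail_conj_mul lam u v r hu, tail_VDV]) Real.sqrt
  rw [h]
  refine Finset.sum_congr rfl fun j _ => ?_
  rw [Real.sqrt_sq]
  unfold lamt
  split
  · exact hnn j
  · exact le_refl 0

end Aux

/-- If `M` is an ε-JL map of the smallest `N−r` left and right singular vectors
of `A`, then `σ₁(M A_{∖r} M*) ≤ (1+ε)·‖A_{∖r}‖_*`. -/
theorem stmt_1 {N m : ℕ} (A : Matrix (Fin N) (Fin N) ℂ)
    (lam : Fin N → ℝ) (u v : Fin N → Fin N → ℂ)
    (hord : ∀ i j : Fin N, i ≤ j → lam j ≤ lam i) (hnn : ∀ j, 0 ≤ lam j)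
    (hu : ∀ i j, ∑ k, (starRingEnd ℂ) (u i k) * u j k = if i = j then 1 else 0)
    (hv : ∀ i j, ∑ k, (starRingEnd ℂ) (v i k) * v j k = if i = j then 1 else 0)
    (hA : A = ∑ j, lam j • Matrix.vecMulVec (u j) (fun k => (starRingEnd ℂ) (v j k)))
    (r : ℕ) (hr1 : 1 ≤ r) (hrN : r ≤ N)
    (ε : ℝ) (hε0 : 0 < ε) (hε1 : ε < 1)
    (M : Matrix (Fin m) (Fin N) ℂ)
    (hM : IsJLMap M ε {x | ∃ j : Fin N, r ≤ (j : ℕ) ∧ (x = u j ∨ x = v j)}) :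
    sval (M * tailMat lam u v r * Mᴴ) 0 ≤ (1 + ε) * nuclearNorm (tailMat lam u v r) := by
  classical
  set S : ℝ := ∑ j, lamt lam r j with hS
  have hSnn : 0 ≤ S := Finset.sum_nonneg fun j _ => by
    unfold lamt; split; exacts [hnn j, le_refl 0]
  have hlamtnn : ∀ j, 0 ≤ lamt lam r j := fun j => by
    unfold lamt; split; exacts [hnn j, le_refl 0]
  have hεnn : (0 : ℝ) ≤ 1 + ε := by linarith
  -- squared norms of singular vectors are 1
  have hnsqu : ∀ j, nsq (u j) = 1 := by
    intro j
    have := star_dot_self (u j)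
    rw [star_dot (u j) (u j), hu j j, if_pos rfl] at this
    exact_mod_cast this.symm
  have hnsqv : ∀ j, nsq (v j) = 1 := by
    intro j
    have := star_dot_self (v j)
    rw [star_dot (v j) (v j), hv j j, if_pos rfl] at this
    exact_mod_cast this.symm
  -- JL bounds
  have hJLu : ∀ j : Fin N, r ≤ (j : ℕ) → nsq (M *ᵥ u j) ≤ 1 + ε := by
    intro j hj
    have := (hM (u j) ⟨j, hj, Or.inl rfl⟩).2
    rwa [hnsqu j, mul_one] at this
  have hJLv : ∀ j : Fin N, r ≤ (j : ℕ) → nsq (M *ᵥ v j) ≤ 1 + ε := by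
    intro j hj
    have := (hM (v j) ⟨j, hj, Or.inr rfl⟩).2
    rwa [hnsqv j, mul_one] at this
  -- operator norm bound for M * T * Mᴴ
  have hop : ∀ x, nsq ((M * tailMat lam u v r * Mᴴ) *ᵥ x) ≤ ((1 + ε) * S) ^ 2 * nsq x := by
    intro x
    have hBx : (M * tailMat lam u v r * Mᴴ) *ᵥ x
        = ∑ j, lamt lam r j •
            ((dotProduct (star (v j)) (Mᴴ *ᵥ x)) • (M *ᵥ u j)) := by
      rw [← Matrix.mulVec_mulVec, ← Matrix.mulVec_mulVec, tailMat_eq, sum_mulVec, mulVec_sum]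
      refine Finset.sum_congr rfl fun j _ => ?_
      rw [Matrix.smul_mulVec, vecMulVec_mulVec, Matrix.mulVec_smul, Matrix.mulVec_smul]
    -- norm estimate in Euclidean space
    set E : (Fin m → ℂ) → EuclideanSpace ℂ (Fin m) := fun y => (WithLp.equiv 2 (Fin m → ℂ)).symm y with hE
    have hnormle : ‖E ((M * tailMat lam u v r * Mᴴ) *ᵥ x)‖
        ≤ ∑ j, lamt lam r j * ((Real.sqrt (1 + ε) * Real.sqrt (nsq x)) * Real.sqrt (1 + ε)) := by
      rw [hBx]
      have hEsum : E (∑ j, lamt lam r j •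
          ((dotProduct (star (v j)) (Mᴴ *ᵥ x)) • (M *ᵥ u j)))
          = ∑ j, lamt lam r j •
            ((dotProduct (star (v j)) (Mᴴ *ᵥ x)) • E (M *ᵥ u j)) := by
          ext i; simp [hE]
      rw [hEsum]
      refine le_trans (norm_sum_le _ _) (Finset.sum_le_sum fun j _ => ?_)
      rw [norm_smul, norm_smul]
      by_cases hj : r ≤ (j : ℕ)
      · have hcj : dotProduct (star (v j)) (Mᴴ *ᵥ x)
            = dotProduct (star (M *ᵥ v j)) x := by
          rw [Matrix.dotProduct_mulVec, ← Matrix.star_mulVec]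
        have hinner : ‖dotProduct (star (M *ᵥ v j)) x‖
            ≤ ‖E (M *ᵥ v j)‖ * ‖E x‖ := by
          rw [dotProduct_comm, ← EuclideanSpace.inner_toLp_toLp]
          exact norm_inner_le_norm _ _
        have hMv : ‖E (M *ᵥ v j)‖ ≤ Real.sqrt (1 + ε) := by
          rw [hE, norm_eq_sqrt_nsq]
          exact Real.sqrt_le_sqrt (hJLv j hj)
        have hMu : ‖E (M *ᵥ u j)‖ ≤ Real.sqrt (1 + ε) := by
          rw [hE, norm_eq_sqrt_nsq]
          exact Real.sqrt_le_sqrt (hJLu j hj)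
        have hxn : ‖E x‖ = Real.sqrt (nsq x) := norm_eq_sqrt_nsq x
        have h1 : ‖lamt lam r j‖ = lamt lam r j := Real.norm_of_nonneg (hlamtnn j)
        rw [h1]
        refine mul_le_mul_of_nonneg_left ?_ (hlamtnn j)
        have hc : ‖dotProduct (star (v j)) (Mᴴ *ᵥ x)‖
            ≤ Real.sqrt (1 + ε) * Real.sqrt (nsq x) := by
          rw [hcj]
          refine le_trans hinner ?_
          rw [hxn]
          exact mul_le_mul_of_nonneg_right hMv (Real.sqrt_nonneg _)
        exact mul_le_mul hc hMu (norm_nonneg _)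
          (by positivity)
      · have : lamt lam r j = 0 := by unfold lamt; rw [if_neg hj]
        rw [this]
        simp
    have hsum : (∑ j, lamt lam r j *
        ((Real.sqrt (1 + ε) * Real.sqrt (nsq x)) * Real.sqrt (1 + ε)))
        = ((1 + ε) * S) * Real.sqrt (nsq x) := by
      rw [← Finset.sum_mul, ← hS]
      rw [show (Real.sqrt (1 + ε) * Real.sqrt (nsq x)) * Real.sqrt (1 + ε)
          = (Real.sqrt (1 + ε) * Real.sqrt (1 + ε)) * Real.sqrt (nsq x) by ring,
        Real.mul_self_sqrt hεnn]
      ring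
    rw [hsum] at hnormle
    have := pow_le_pow_left₀ (norm_nonneg _) hnormle 2
    rw [← nsq_eq_norm_sq] at this
    calc nsq ((M * tailMat lam u v r * Mᴴ) *ᵥ x)
        ≤ (((1 + ε) * S) * Real.sqrt (nsq x)) ^ 2 := this
      _ = ((1 + ε) * S) ^ 2 * nsq x := by
          rw [mul_pow, Real.sq_sqrt (nsq_nonneg x)]
  have hfin := sval_le_of_opbound (M * tailMat lam u v r * Mᴴ)
    (mul_nonneg hεnn hSnn) hop 0
  rwa [nuclearNorm_tailMat lam u v r hnn hu hv, ← hS]
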